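/- Let f be a proper, consistently committee-monotone ABC voting rule over m candidates. For every ℓ ∈ {1,...,m-1} and every increasing sequence of committees W_1 ⊆ ... ⊆ W_ℓ with |W_k| = k, there exists a profile A such that f(A,k) = {W_k} for all k ∈ {1,...,ℓ} and f(A,ℓ+1) = {W_ℓ ∪ {x} : x ∈ C \ W_ℓ}. -/

import Mathlib

open Finset
open scoped Classical

structure Profile (C : Type) where
  voters : Finset ℕ
  ballot : ℕ → Finset C

namespace Profile

variable {C : Type}

def combine (A B : Profile C) : Profile C :=
  ⟨A.voters ∪ B.voters, fun i => if i ∈ A.voters then A.ballot i else B.ballot i⟩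

def Disj (A B : Profile C) : Prop := Disjoint A.voters B.voters

def permVoters (π : Equiv.Perm ℕ) (A : Profile C) : Profile C :=
  ⟨A.voters.map π.toEmbedding, fun i => A.ballot (π.symm i)⟩

def mapCand [DecidableEq C] (τ : Equiv.Perm C) (A : Profile C) : Profile C :=
  ⟨A.voters, fun i => (A.ballot i).image τ⟩

end Profile

variable {C : Type} [Fintype C] [DecidableEq C]

/-- `B` is a relabeled (disjoint-renaming) copy of the profile `A`. -/
def IsCopy (A B : Profile C) : Prop :=
  ∃ e : ℕ ↪ ℕ, B.voters = A.voters.map e ∧ ∀ i ∈ A.voters, B.ballot (e i) = A.ballot i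

/-- `B` consists of `j` pairwise disjoint copies of the profile `A`. -/
def IsNCopies (j : ℕ) (A B : Profile C) : Prop :=
  ∃ P : Fin j → Profile C,
    (∀ t, IsCopy A (P t)) ∧
    (∀ s t, s ≠ t → Disjoint (P s).voters (P t).voters) ∧
    B.voters = Finset.univ.biUnion (fun t => (P t).voters) ∧
    ∀ t, ∀ i ∈ (P t).voters, B.ballot i = (P t).ballot i

/-- An ABC voting rule: chooses `{∅}` for size `0` and a nonempty set of size-`k`
committees for every feasible committee size `k`. -/
def IsABCRule (f : Profile C → ℕ → Finset (Finset C)) : Prop :=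
  (∀ A, f A 0 = {∅}) ∧
  (∀ A k, k ≤ Fintype.card C → (f A k).Nonempty) ∧
  (∀ A k W, W ∈ f A k → W.card = k)

/-- A generator function returns a subset of the unchosen candidates. -/
def IsGenerator (g : Profile C → Finset C → Finset C) : Prop :=
  ∀ A W, g A W ⊆ univ \ W

/-- `g` generates `f`: the winning committees of size `k` are obtained by extending the winning
committees of size `k-1` with the candidates chosen by `g`, which is nonempty on them. -/
def Generates (g : Profile C → Finset C → Finset C)
    (f : Profile C → ℕ → Finset (Finset C)) : Prop :=
  ∀ A k, 1 ≤ k → k ≤ Fintype.card C →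
    (∀ W ∈ f A (k-1), (g A W).Nonempty) ∧
    f A k = (f A (k-1)).biUnion fun W => (g A W).image fun x => insert x W

/-- Consistency of a generator function. -/
def ConsistentGen (g : Profile C → Finset C → Finset C) : Prop :=
  ∀ A A' W, Profile.Disj A A' → W ≠ univ →
    (g A W ∩ g A' W).Nonempty → (g (A.combine A') W).Nonempty →
    g (A.combine A') W = g A W ∩ g A' W

def Anonymous (f : Profile C → ℕ → Finset (Finset C)) : Prop :=
  ∀ A (π : Equiv.Perm ℕ) k, f (Profile.permVoters π A) k = f A k

def Neutral (f : Profile C → ℕ → Finset (Finset C)) : Prop :=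
  ∀ A (τ : Equiv.Perm C) k, f (Profile.mapCand τ A) k = (f A k).image fun W => W.image τ

def ContinuousRule (f : Profile C → ℕ → Finset (Finset C)) : Prop :=
  ∀ A A' k, Profile.Disj A A' → (f A k).card = 1 →
    ∃ j, 0 < j ∧ ∀ B, IsNCopies j A B → Profile.Disj B A' → f (B.combine A') k = f A k

def NonImposing (f : Profile C → ℕ → Finset (Finset C)) : Prop :=
  ∀ W : Finset C, ∃ A, f A W.card = {W}

def ProperRule (f : Profile C → ℕ → Finset (Finset C)) : Prop :=
  IsABCRule f ∧ Anonymous f ∧ Neutral f ∧ ContinuousRule f ∧ NonImposing f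

def ConsistentlyCommitteeMonotone (f : Profile C → ℕ → Finset (Finset C)) : Prop :=
  ∃ g, IsGenerator g ∧ ConsistentGen g ∧ Generates g f

section Aux

def Clean (A : Profile C) : Prop := ∀ i, i ∉ A.voters → A.ballot i = ∅

lemma clean_permVoters {A : Profile C} (h : Clean A) (π : Equiv.Perm ℕ) :
    Clean (Profile.permVoters π A) := by
  intro i hi
  apply h
  intro hmem
  exact hi (Finset.mem_map.mpr ⟨π.symm i, hmem, π.apply_symm_apply i⟩)

lemma clean_mapCand {A : Profile C} (h : Clean A) (τ : Equiv.Perm C) :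
    Clean (Profile.mapCand τ A) := by
  intro i hi
  show (A.ballot i).image τ = ∅
  rw [h i hi, Finset.image_empty]

lemma clean_combine {A B : Profile C} (h : Clean B) : Clean (A.combine B) := by
  intro i hi
  show (if i ∈ A.voters then A.ballot i else B.ballot i) = ∅
  rw [if_neg (fun hA => hi (Finset.mem_union_left _ hA))]
  exact h i (fun hB => hi (Finset.mem_union_right _ hB))

/-- A block swap permutation of `ℕ`, swapping `[0,N)` with `[M, M+N)`. -/
def blockSwap (N M : ℕ) (h : N ≤ M) : Equiv.Perm ℕ where
  toFun i := if i < N then i + M else if M ≤ i ∧ i < M + N then i - M else i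
  invFun i := if i < N then i + M else if M ≤ i ∧ i < M + N then i - M else i
  left_inv := by intro i; dsimp only; split_ifs <;> omega
  right_inv := by intro i; dsimp only; split_ifs <;> omega

lemma blockSwap_apply_lt {N M : ℕ} (h : N ≤ M) {i : ℕ} (hi : i < N) :
    blockSwap N M h i = i + M := if_pos hi

lemma blockSwap_symm_apply {N M : ℕ} (h : N ≤ M) (i : ℕ) :
    (blockSwap N M h).symm i = if i < N then i + M else if M ≤ i ∧ i < M + N then i - M else i :=
  rfl

lemma exists_fresh (A : Profile C) (S : Finset ℕ) :
    ∃ π : Equiv.Perm ℕ, Disjoint (Profile.permVoters π A).voters S := by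
  set N := (A.voters ∪ S).sup id + 1 with hN
  refine ⟨blockSwap N N le_rfl, Finset.disjoint_left.mpr ?_⟩
  intro i hi hiS
  have hSlt : i < N := by
    have := Finset.le_sup (f := id) (Finset.mem_union_right A.voters hiS)
    simp only [id_eq] at this
    omega
  obtain ⟨j, hj, hji⟩ := Finset.mem_map.mp hi
  have hjlt : j < N := by
    have := Finset.le_sup (f := id) (Finset.mem_union_left S hj)
    simp only [id_eq] at this
    omega
  have hji' : blockSwap N N le_rfl j = i := hji
  rw [blockSwap_apply_lt le_rfl hjlt] at hji'
  omega

end Aux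

section Rule

variable {f : Profile C → ℕ → Finset (Finset C)} {g : Profile C → Finset C → Finset C}

lemma g_subset (hg1 : IsGenerator g) {A : Profile C} {U : Finset C} {z : C}
    (hz : z ∈ g A U) : z ∉ U := by
  have := hg1 A U hz
  exact (Finset.mem_sdiff.mp this).2

/-- If `f` picks unique committees at two consecutive levels, `g` is the singleton link. -/
lemma g_singleton (habc : IsABCRule f) (hg1 : IsGenerator g) (hg3 : Generates g f)
    {A : Profile C} {k : ℕ} {U V : Finset C} {x : C}
    (hk1 : 1 ≤ k) (hk2 : k ≤ Fintype.card C)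
    (hU : f A (k-1) = {U}) (hV : f A k = {V})
    (hx : insert x U = V) (hxU : x ∉ U) :
    g A U = {x} := by
  obtain ⟨hne, heq⟩ := hg3 A k hk1 hk2
  rw [hU] at heq hne
  rw [Finset.singleton_biUnion] at heq
  have hgne : (g A U).Nonempty := hne U (Finset.mem_singleton_self U)
  have huniq : ∀ z ∈ g A U, z = x := by
    intro z hz
    have hmem : insert z U ∈ f A k := by
      rw [heq]; exact Finset.mem_image_of_mem _ hz
    rw [hV, Finset.mem_singleton] at hmem
    have hzU : z ∉ U := g_subset hg1 hz
    have : z ∈ insert x U := by rw [hx, ← hmem]; exact Finset.mem_insert_self z U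
    rcases Finset.mem_insert.mp this with h | h
    · exact h
    · exact absurd h hzU
  obtain ⟨z₀, hz₀⟩ := hgne
  have := huniq z₀ hz₀
  subst this
  exact Finset.eq_singleton_iff_unique_mem.mpr ⟨hz₀, huniq⟩

lemma image_insert_inj {U S T : Finset C}
    (hS : ∀ z ∈ S, z ∉ U) (hT : ∀ z ∈ T, z ∉ U)
    (h : S.image (fun z => insert z U) = T.image (fun z => insert z U)) : S = T := by
  have key : ∀ (S' T' : Finset C), (∀ z ∈ S', z ∉ U) → (∀ z ∈ T', z ∉ U) →
      S'.image (fun z => insert z U) = T'.image (fun z => insert z U) → S' ⊆ T' := by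
    intro S' T' hS' hT' h' z hz
    have : insert z U ∈ T'.image (fun z => insert z U) := by
      rw [← h']; exact Finset.mem_image_of_mem _ hz
    obtain ⟨w, hw, hwz⟩ := Finset.mem_image.mp this
    have : z ∈ insert w U := by rw [hwz]; exact Finset.mem_insert_self z U
    rcases Finset.mem_insert.mp this with h | h
    · rwa [h]
    · exact absurd h (hS' z hz)
  exact Finset.Subset.antisymm (key S T hS hT h) (key T S hT hS h.symm)

/-- If `f` picks a unique committee at level `k-1` and the full tie at level `k`,
then `g` is the full complement. -/
lemma g_full (habc : IsABCRule f) (hg1 : IsGenerator g) (hg3 : Generates g f)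
    {A : Profile C} {k : ℕ} {U : Finset C}
    (hk1 : 1 ≤ k) (hk2 : k ≤ Fintype.card C)
    (hU : f A (k-1) = {U})
    (hV : f A k = (univ \ U).image (fun z => insert z U)) :
    g A U = univ \ U := by
  obtain ⟨hne, heq⟩ := hg3 A k hk1 hk2
  rw [hU, Finset.singleton_biUnion] at heq
  apply image_insert_inj (U := U)
  · intro z hz; exact g_subset hg1 hz
  · intro z hz; exact (Finset.mem_sdiff.mp hz).2
  · rw [← heq, hV]

/-- The key combination lemma: combining two profiles whose generators intersect in the
chain links yields unique winners along the chain. -/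
lemma combine_chain (habc : IsABCRule f) (hg2 : ConsistentGen g) (hg3 : Generates g f)
    {X Y : Profile C} {t : ℕ} {V : ℕ → Finset C} {x : ℕ → C}
    (hd : Profile.Disj X Y) (ht : t ≤ Fintype.card C)
    (hV0 : V 0 = ∅)
    (hx : ∀ k, 1 ≤ k → k ≤ t → insert (x k) (V (k-1)) = V k)
    (hcard : ∀ k, k ≤ t → (V k).card = k)
    (hg : ∀ k, 1 ≤ k → k ≤ t → g X (V (k-1)) ∩ g Y (V (k-1)) = {x k}) :
    ∀ k, k ≤ t → f (X.combine Y) k = {V k} := by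
  intro k
  induction k with
  | zero => intro _; rw [habc.1, hV0]
  | succ k ih =>
    intro hk
    have hprev := ih (by omega)
    obtain ⟨hne, heq⟩ := hg3 (X.combine Y) (k+1) (by omega) (by omega)
    simp only [Nat.add_sub_cancel] at heq hne
    rw [hprev, Finset.singleton_biUnion] at heq
    have hVne : V k ≠ univ := by
      intro h
      have h1 : (V k).card = k := hcard k (by omega)
      rw [h, Finset.card_univ] at h1
      omega
    have hgc : g X (V k) ∩ g Y (V k) = {x (k+1)} := by
      have := hg (k+1) (by omega) hk
      rwa [Nat.add_sub_cancel] at this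
    have hcne : (g (X.combine Y) (V k)).Nonempty := by
      apply hne
      rw [hprev]
      exact Finset.mem_singleton_self _
    have hcons := hg2 X Y (V k) hd hVne (by rw [hgc]; exact Finset.singleton_nonempty _) hcne
    rw [heq, hcons, hgc, Finset.image_singleton]
    have hxk := hx (k+1) (by omega) hk
    rw [Nat.add_sub_cancel] at hxk
    rw [hxk]
end Rule

section Chain

variable {f : Profile C → ℕ → Finset (Finset C)} {g : Profile C → Finset C → Finset C}

/-- Monotonicity of an insert-chain. -/
lemma chain_mono {t : ℕ} {V : ℕ → Finset C} {y : ℕ → C}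
    (hx : ∀ k, 1 ≤ k → k ≤ t → insert (y k) (V (k-1)) = V k) :
    ∀ j k, j ≤ k → k ≤ t → V j ⊆ V k := by
  have key : ∀ k, k ≤ t → ∀ j, j ≤ k → V j ⊆ V k := by
    intro k
    induction k with
    | zero =>
      intro _ j hj
      have : j = 0 := by omega
      rw [this]
    | succ k ih =>
      intro hkt j hj
      rcases Nat.lt_or_ge j (k+1) with h | h
      · have hsub : V k ⊆ V (k+1) := by
          have := hx (k+1) (by omega) hkt
          rw [Nat.add_sub_cancel] at this
          rw [← this]
          exact Finset.subset_insert _ _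
        exact (ih (by omega) j (by omega)).trans hsub
      · have : j = k+1 := by omega
        rw [this]
  exact fun j k hjk hkt => key k hkt j hjk

/-- Extract a `g`-linked chain below a unique winning committee. -/
lemma chain_extract (habc : IsABCRule f) (hg1 : IsGenerator g) (hg3 : Generates g f)
    {D : Profile C} {l : ℕ} {Wl : Finset C}
    (hl1 : 1 ≤ l) (hl2 : l ≤ Fintype.card C) (hD : f D l = {Wl}) :
    ∃ (V : ℕ → Finset C) (y : ℕ → C), V 0 = ∅ ∧ V l = Wl ∧
      (∀ k, k ≤ l → V k ∈ f D k) ∧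
      (∀ k, 1 ≤ k → k ≤ l →
        insert (y k) (V (k-1)) = V k ∧ y k ∉ V (k-1) ∧ y k ∈ g D (V (k-1))) := by
  have hCne : Nonempty C := Fintype.card_pos_iff.mp (by omega)
  have Q : ∀ j, j ≤ l → ∃ (V : ℕ → Finset C) (y : ℕ → C),
      (∀ k, l - j ≤ k → k ≤ l → V k ∈ f D k) ∧ V l = Wl ∧
      (∀ k, l - j < k → k ≤ l →
        insert (y k) (V (k-1)) = V k ∧ y k ∉ V (k-1) ∧ y k ∈ g D (V (k-1))) := by
    intro j
    induction j with
    | zero =>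
      intro _
      refine ⟨fun _ => Wl, fun _ => Classical.arbitrary _, ?_, rfl, ?_⟩
      · intro k hk1 hk2
        have : k = l := by omega
        rw [this, hD]
        exact Finset.mem_singleton_self _
      · intro k hk1 hk2
        omega
    | succ j ihj =>
      intro hj
      obtain ⟨V, y, hmem, hWl, hlink⟩ := ihj (by omega)
      have hk₀1 : 1 ≤ l - j := by omega
      obtain ⟨_, heq⟩ := hg3 D (l - j) hk₀1 (by omega)
      have hVk₀ : V (l - j) ∈ f D (l - j) := hmem (l - j) le_rfl (by omega)
      rw [heq] at hVk₀
      obtain ⟨U, hU, hVim⟩ := Finset.mem_biUnion.mp hVk₀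
      obtain ⟨z, hz, hzU⟩ := Finset.mem_image.mp hVim
      refine ⟨fun k => if k = l - j - 1 then U else V k,
              fun k => if k = l - j then z else y k, ?_, ?_, ?_⟩
      · intro k hk1 hk2
        show (if k = l - j - 1 then U else V k) ∈ f D k
        by_cases h : k = l - j - 1
        · rw [if_pos h, h]
          exact hU
        · rw [if_neg h]
          exact hmem k (by omega) hk2
      · show (if l = l - j - 1 then U else V l) = Wl
        rw [if_neg (by omega)]
        exact hWl
      · intro k hk1 hk2
        show insert (if k = l - j then z else y k)
              (if k - 1 = l - j - 1 then U else V (k-1)) =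
              (if k = l - j - 1 then U else V k) ∧
            (if k = l - j then z else y k) ∉ (if k - 1 = l - j - 1 then U else V (k-1)) ∧
            (if k = l - j then z else y k) ∈ g D (if k - 1 = l - j - 1 then U else V (k-1))
        by_cases h : k = l - j
        · rw [if_pos h, if_pos (show k - 1 = l - j - 1 by omega),
              if_neg (show ¬(k = l - j - 1) by omega), h, hzU]
          exact ⟨rfl, g_subset hg1 hz, hz⟩
        · have hkk : l - j < k := by omega
          rw [if_neg h, if_neg (show ¬(k - 1 = l - j - 1) by omega),
              if_neg (show ¬(k = l - j - 1) by omega)]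
          exact hlink k (by omega) hk2
  obtain ⟨V, y, hmem, hWl, hlink⟩ := Q l le_rfl
  have hV0 : V 0 = ∅ := by
    have h0 : V 0 ∈ f D 0 := hmem 0 (by omega) (by omega)
    rw [habc.1] at h0
    exact Finset.mem_singleton.mp h0
  exact ⟨V, y, hV0, hWl, fun k hk => hmem k (by omega) hk,
    fun k hk1 hk2 => hlink k (by omega) hk2⟩

/-- The generator of `D` at the penultimate chain element is the singleton link. -/
lemma g_top (habc : IsABCRule f) (hg1 : IsGenerator g) (hg3 : Generates g f)
    {D : Profile C} {l : ℕ} {Wl U : Finset C} {z : C}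
    (hl1 : 1 ≤ l) (hl2 : l ≤ Fintype.card C) (hD : f D l = {Wl})
    (hU : U ∈ f D (l-1)) (hz : insert z U = Wl) (hzU : z ∉ U) (hzg : z ∈ g D U) :
    g D U = {z} := by
  obtain ⟨hne, heq⟩ := hg3 D l hl1 hl2
  apply Finset.eq_singleton_iff_unique_mem.mpr
  refine ⟨hzg, ?_⟩
  intro w hw
  have hmem : insert w U ∈ f D l := by
    rw [heq]
    exact Finset.mem_biUnion.mpr ⟨U, hU, Finset.mem_image_of_mem _ hw⟩
  rw [hD, Finset.mem_singleton] at hmem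
  have hwU : w ∉ U := g_subset hg1 hw
  have : w ∈ insert z U := by rw [hz, ← hmem]; exact Finset.mem_insert_self w U
  rcases Finset.mem_insert.mp this with h | h
  · exact h
  · exact absurd h hwU

/-- A permutation of candidates mapping one insert-chain onto another. -/
lemma exists_perm_chain {t : ℕ} {V W : ℕ → Finset C} {y x : ℕ → C}
    (hV0 : V 0 = ∅) (hW0 : W 0 = ∅)
    (hy : ∀ k, 1 ≤ k → k ≤ t → insert (y k) (V (k-1)) = V k ∧ y k ∉ V (k-1))
    (hx : ∀ k, 1 ≤ k → k ≤ t → insert (x k) (W (k-1)) = W k ∧ x k ∉ W (k-1)) :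
    ∃ τ : Equiv.Perm C, ∀ k, k ≤ t → (V k).image τ = W k := by
  revert hy hx
  induction t with
  | zero =>
    intro hy hx
    refine ⟨1, ?_⟩
    intro k hk
    have : k = 0 := by omega
    rw [this, hV0, hW0, Finset.image_empty]
  | succ t ih =>
    intro hy hx
    obtain ⟨τ, hτ⟩ := ih (fun k h1 h2 => hy k h1 (by omega)) (fun k h1 h2 => hx k h1 (by omega))
    obtain ⟨hyi, hyn⟩ := hy (t+1) (by omega) le_rfl
    obtain ⟨hxi, hxn⟩ := hx (t+1) (by omega) le_rfl
    rw [Nat.add_sub_cancel] at hyi hyn hxi hxn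
    set σ := Equiv.trans τ (Equiv.swap (τ (y (t+1))) (x (t+1))) with hσ
    have happ : ∀ c, σ c = Equiv.swap (τ (y (t+1))) (x (t+1)) (τ c) := fun c => rfl
    refine ⟨σ, ?_⟩
    have hfix : ∀ k, k ≤ t → (V k).image σ = W k := by
      intro k hk
      have himτ : (V k).image τ = W k := hτ k hk
      rw [← himτ]
      apply Finset.image_congr
      intro c hc
      rw [happ]
      have hcV : c ∈ V t := chain_mono (fun k h1 h2 => (hy k h1 h2).1) k t hk (by omega) hc
      have h1 : τ c ≠ τ (y (t+1)) := by
        intro h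
        exact hyn (τ.injective h ▸ hcV)
      have h2 : τ c ≠ x (t+1) := by
        intro h
        apply hxn
        have hcW : τ c ∈ W t := by
          rw [← hτ t le_rfl]
          exact Finset.mem_image_of_mem _ hcV
        rwa [h] at hcW
      rw [Equiv.swap_apply_of_ne_of_ne h1 h2]
    intro k hk
    rcases Nat.lt_or_ge k (t+1) with h | h
    · exact hfix k (by omega)
    · have hkt : k = t+1 := by omega
      subst hkt
      rw [← hyi, Finset.image_insert, hfix t le_rfl, happ, Equiv.swap_apply_left, hxi]

end Chain

lemma Profile.ext' {P Q : Profile C} (h1 : P.voters = Q.voters)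
    (h2 : P.ballot = Q.ballot) : P = Q := by
  cases P; cases Q; simp_all

/-- Nested combination of a list of profiles. -/
def nestP : List (Profile C) → Profile C
  | [] => ⟨∅, fun _ => ∅⟩
  | [p] => p
  | p :: q :: r => p.combine (nestP (q :: r))

lemma nestP_cons {p : Profile C} {l : List (Profile C)} (h : l ≠ []) :
    nestP (p :: l) = p.combine (nestP l) := by
  cases l with
  | nil => exact absurd rfl h
  | cons q r => rfl


section Sym

variable {f : Profile C → ℕ → Finset (Finset C)} {g : Profile C → Finset C → Finset C}

lemma sym_step (habc : IsABCRule f) (hanon : Anonymous f) (hneut : Neutral f)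
    (hg1 : IsGenerator g) (hg2 : ConsistentGen g) (hg3 : Generates g f)
    {t : ℕ} (ht : t + 1 ≤ Fintype.card C)
    {W : ℕ → Finset C} (hW0 : W 0 = ∅) {x : ℕ → C}
    (hx : ∀ k, 1 ≤ k → k ≤ t → insert (x k) (W (k-1)) = W k ∧ x k ∉ W (k-1))
    (hcard : ∀ k, k ≤ t → (W k).card = k)
    {E₀ : Profile C} (hcl : Clean E₀)
    (hE : ∀ k, 1 ≤ k → k ≤ t → f E₀ k = {W k}) :
    ∃ F : Profile C, Clean F ∧ (∀ k, 1 ≤ k → k ≤ t → f F k = {W k}) ∧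
      f F (t+1) = (univ \ W t).image (fun z => insert z (W t)) := by
  classical
  have hWsub : ∀ k, k ≤ t → W k ⊆ W t :=
    fun k hk => chain_mono (fun k h1 h2 => (hx k h1 h2).1) k t hk le_rfl
  -- the pointwise stabilizer of `W t`
  set G : Finset (Equiv.Perm C) :=
    Finset.univ.filter (fun σ : Equiv.Perm C => ∀ a ∈ W t, σ a = a) with hGdef
  have hGmem : ∀ σ : Equiv.Perm C, σ ∈ G ↔ ∀ a ∈ W t, σ a = a := by
    intro σ; rw [hGdef, Finset.mem_filter]; simp
  have h1G : (1 : Equiv.Perm C) ∈ G := (hGmem 1).mpr (fun a _ => rfl)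
  have hfixim : ∀ σ ∈ G, ∀ k, k ≤ t → (W k).image σ = W k := by
    intro σ hσ k hk
    have : (W k).image σ = (W k).image id := by
      apply Finset.image_congr
      intro a ha
      exact (hGmem σ).mp hσ a (hWsub k hk ha)
    rw [this, Finset.image_id]
  set gl : List (Equiv.Perm C) := G.toList with hgldef
  set n : ℕ := gl.length with hndef
  have hnG : n = G.card := Finset.length_toList G
  have hn : 0 < n := by
    rw [hnG]
    exact Finset.card_pos.mpr ⟨1, h1G⟩
  set τf : ℕ → Equiv.Perm C := fun u => gl.getD u 1 with hτdef
  have hτget : ∀ u (h : u < n), τf u = gl.get ⟨u, h⟩ := by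
    intro u h; rw [hτdef]; exact List.getD_eq_get gl 1 ⟨u, h⟩
  have hτmem : ∀ u, u < n → τf u ∈ G := by
    intro u h
    rw [hτget u h]
    exact Finset.mem_toList.mp (List.get_mem gl ⟨u, h⟩)
  have hidx : ∀ ρ, ρ ∈ G → (gl.idxOf ρ < n ∧ τf (gl.idxOf ρ) = ρ) := by
    intro ρ hρ
    have hmem : ρ ∈ gl := Finset.mem_toList.mpr hρ
    have hlt : gl.idxOf ρ < n := List.idxOf_lt_length_iff.mpr hmem
    refine ⟨hlt, ?_⟩
    rw [hτget _ hlt]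
    exact List.idxOf_get hlt
  have hidx_get : ∀ u, u < n → gl.idxOf (τf u) = u := by
    intro u hu
    have hmem : τf u ∈ gl := by rw [hτget u hu]; exact List.get_mem gl ⟨u, hu⟩
    have hlt : gl.idxOf (τf u) < n := List.idxOf_lt_length_iff.mpr hmem
    have : gl.get ⟨gl.idxOf (τf u), hlt⟩ = gl.get ⟨u, hu⟩ := by
      rw [List.idxOf_get hlt, hτget u hu]
    have := ((Finset.nodup_toList G).get_inj_iff).mp this
    exact Fin.val_eq_of_eq this
  have hGmul : ∀ ρ σ : Equiv.Perm C, ρ ∈ G → σ ∈ G → ρ * σ ∈ G := by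
    intro ρ σ hρ hσ
    refine (hGmem _).mpr (fun a ha => ?_)
    rw [Equiv.Perm.mul_apply, (hGmem σ).mp hσ a ha, (hGmem ρ).mp hρ a ha]
  have hGinv : ∀ σ : Equiv.Perm C, σ ∈ G → σ⁻¹ ∈ G := by
    intro σ hσ
    refine (hGmem _).mpr (fun a ha => ?_)
    have := (hGmem σ).mp hσ a ha
    conv_lhs => rw [← this]
    exact σ.symm_apply_apply a
  -- voter blocks
  set N : ℕ := E₀.voters.sup id + 1 with hNdef
  have hN : 0 < N := by omega
  have hvN : ∀ i ∈ E₀.voters, i < N := by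
    intro i hi
    have := Finset.le_sup (f := id) hi
    simp only [id_eq] at this
    omega
  have hMN : ∀ u : ℕ, N ≤ (u+1)*N := by
    intro u
    calc N = 1*N := (one_mul N).symm
    _ ≤ (u+1)*N := Nat.mul_le_mul_right N (by omega)
  set bsw : ℕ → Equiv.Perm ℕ := fun u => blockSwap N ((u+1)*N) (hMN u) with hbswdef
  set part : ℕ → Profile C :=
    fun u => Profile.permVoters (bsw u) (Profile.mapCand (τf u) E₀) with hpartdef
  -- division facts
  have hdm : ∀ u r : ℕ, r < N → ((u+1)*N + r) / N = u + 1 ∧ ((u+1)*N + r) % N = r := by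
    intro u r hr
    constructor
    · rw [Nat.add_comm, Nat.add_mul_div_right r (u+1) hN, Nat.div_eq_of_lt hr]
      omega
    · rw [Nat.add_comm, Nat.add_mul_mod_self_right, Nat.mod_eq_of_lt hr]
  have hslab : ∀ i, N ≤ i → i < (n+1)*N →
      (i / N - 1 < n ∧ i = (i / N - 1 + 1)*N + i % N ∧ i % N < N) := by
    intro i h1 h2
    have hd1 : 1 ≤ i / N := (Nat.one_le_div_iff hN).mpr h1
    have hd2 : i / N < n + 1 := (Nat.div_lt_iff_lt_mul hN).mpr h2
    have hmod : i % N < N := Nat.mod_lt i hN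
    refine ⟨by omega, ?_, hmod⟩
    have : i / N - 1 + 1 = i / N := by omega
    rw [this, Nat.mul_comm]
    have h3 := Nat.div_add_mod i N
    omega
  -- facts about the parts
  have hpartv : ∀ u i, i ∈ (part u).voters ↔ ∃ r ∈ E₀.voters, i = (u+1)*N + r := by
    intro u i
    rw [hpartdef]
    show i ∈ (E₀.voters.map (bsw u).toEmbedding) ↔ _
    rw [Finset.mem_map]
    constructor
    · rintro ⟨r, hr, hri⟩
      refine ⟨r, hr, ?_⟩
      have : bsw u r = r + (u+1)*N := blockSwap_apply_lt (hMN u) (hvN r hr)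
      have hri' : bsw u r = i := hri
      omega
    · rintro ⟨r, hr, hri⟩
      refine ⟨r, hr, ?_⟩
      show bsw u r = i
      rw [blockSwap_apply_lt (hMN u) (hvN r hr)]
      omega
  have hpartb : ∀ u i, (part u).ballot i = (E₀.ballot ((bsw u).symm i)).image (τf u) := by
    intro u i; rfl
  have hbswsymm : ∀ u i, (bsw u).symm i =
      if i < N then i + (u+1)*N else if (u+1)*N ≤ i ∧ i < (u+1)*N + N then i - (u+1)*N else i :=
    fun u i => rfl
  -- part ballots in closed form
  have hpartb' : ∀ u i, (part u).ballot i =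
      if (u+1)*N ≤ i ∧ i < (u+2)*N then (E₀.ballot (i % N)).image (τf u) else ∅ := by
    intro u i
    rw [hpartb, hbswsymm]
    have hu2 : (u+2)*N = (u+1)*N + N := by ring
    by_cases h1 : i < N
    · rw [if_pos h1, if_neg (show ¬((u+1)*N ≤ i ∧ i < (u+2)*N) by
        have := hMN u; omega)]
      have : E₀.ballot (i + (u+1)*N) = ∅ := by
        apply hcl
        intro hmem
        have := hvN _ hmem
        have := hMN u
        omega
      rw [this, Finset.image_empty]
    · rw [if_neg h1]
      by_cases h2 : (u+1)*N ≤ i ∧ i < (u+1)*N + N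
      · rw [if_pos h2, if_pos (show (u+1)*N ≤ i ∧ i < (u+2)*N by omega)]
        have : i % N = i - (u+1)*N := by
          obtain ⟨hq, hm⟩ := hdm u (i - (u+1)*N) (by omega)
          have : (u+1)*N + (i - (u+1)*N) = i := by omega
          rw [this] at hm
          omega
        rw [this]
      · rw [if_neg h2, if_neg (show ¬((u+1)*N ≤ i ∧ i < (u+2)*N) by omega)]
        have : E₀.ballot i = ∅ := by
          apply hcl
          intro hmem
          have := hvN _ hmem
          omega
        rw [this, Finset.image_empty]
  -- the explicit nested profile
  set Fb : ℕ → ℕ → Finset C := fun a i =>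
    if (a+1)*N ≤ i ∧ i < (n+1)*N then (E₀.ballot (i % N)).image (τf (i / N - 1)) else ∅
    with hFbdef
  set Fv : ℕ → Finset ℕ := fun a => (Finset.Ico a n).biUnion (fun u => (part u).voters)
    with hFvdef
  have hFb_part : ∀ a i, a + 1 ≤ n → (a+1)*N ≤ i → i < (a+2)*N →
      Fb a i = (E₀.ballot (i % N)).image (τf a) := by
    intro a i han h1 h2
    have ha2 : (a+2)*N = (a+1)*N + N := by ring
    rw [hFbdef]
    have hin : i < (n+1)*N := lt_of_lt_of_le h2 (Nat.mul_le_mul_right N (by omega))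
    simp only [if_pos (And.intro h1 hin)]
    have hiN : N ≤ i := le_trans (hMN a) h1
    obtain ⟨hu, hieq, hr⟩ := hslab i hiN hin
    have hdiv : i / N - 1 = a := by
      obtain ⟨hq, hm⟩ := hdm a (i - (a+1)*N) (by omega)
      have : (a+1)*N + (i - (a+1)*N) = i := by omega
      rw [this] at hq
      omega
    rw [hdiv]
  have nest_eq : ∀ d a, a + d = n → 0 < d →
      nestP ((List.range' a d).map part) = ⟨Fv a, Fb a⟩ := by
    intro d
    induction d with
    | zero => intro a _ h; omega
    | succ d ih =>
      intro a han _
      rcases Nat.eq_zero_or_pos d with hd0 | hd1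
      · -- single part
        subst hd0
        rw [List.range'_one, List.map_cons, List.map_nil]
        show part a = Profile.mk (Fv a) (Fb a)
        have han' : n = a + 1 := by omega
        apply Profile.ext'
        · show (part a).voters = Fv a
          ext i
          rw [hFvdef]
          simp only [Finset.mem_biUnion, Finset.mem_Ico]
          constructor
          · intro h; exact ⟨a, ⟨le_rfl, by omega⟩, h⟩
          · rintro ⟨u, ⟨hu1, hu2⟩, h⟩
            have : u = a := by omega
            rwa [this] at h
        · show (part a).ballot = Fb a
          funext i
          rw [hpartb' a i]
          by_cases h : (a+1)*N ≤ i ∧ i < (a+2)*N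
          · rw [if_pos h, hFb_part a i (by omega) h.1 h.2]
          · rw [if_neg h, hFbdef]
            simp only
            rw [if_neg (show ¬((a+1)*N ≤ i ∧ i < (n+1)*N) by
              have hnn : (n+1)*N = (a+2)*N := by rw [han']
              omega)]
      · -- cons step
        have hrange : List.range' a (d+1) = a :: List.range' (a+1) d := List.range'_succ
        rw [hrange, List.map_cons]
        have hne : (List.range' (a+1) d).map part ≠ [] := by
          intro h
          have := congrArg List.length h
          simp at this
          omega
        rw [nestP_cons hne, ih (a+1) (by omega) hd1]
        apply Profile.ext'
        · show (part a).voters ∪ Fv (a+1) = Fv a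
          rw [hFvdef]
          simp only
          ext i
          simp only [Finset.mem_union, Finset.mem_biUnion, Finset.mem_Ico]
          constructor
          · rintro (h | ⟨u, ⟨hu1, hu2⟩, h⟩)
            · exact ⟨a, ⟨le_rfl, by omega⟩, h⟩
            · exact ⟨u, ⟨by omega, hu2⟩, h⟩
          · rintro ⟨u, ⟨hu1, hu2⟩, h⟩
            rcases Nat.eq_or_lt_of_le hu1 with heq | hlt
            · left; rwa [heq]
            · right; exact ⟨u, ⟨by omega, hu2⟩, h⟩
        · funext i
          show (if i ∈ (part a).voters then (part a).ballot i else Fb (a+1) i) = Fb a i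
          by_cases hin : i ∈ (part a).voters
          · rw [if_pos hin]
            obtain ⟨r, hr, hi⟩ := (hpartv a i).mp hin
            have hrN := hvN r hr
            have h1 : (a+1)*N ≤ i := by omega
            have h2 : i < (a+2)*N := by
              have : (a+2)*N = (a+1)*N + N := by ring
              omega
            rw [hpartb' a i, if_pos ⟨h1, h2⟩, hFb_part a i (by omega) h1 h2]
          · rw [if_neg hin]
            have ha2 : (a+2)*N = (a+1)*N + N := by ring
            by_cases hc1 : (a+1)*N ≤ i ∧ i < (a+2)*N
            · -- slab of a : both sides empty
              have hrempty : E₀.ballot (i % N) = ∅ := by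
                apply hcl
                intro hmem
                apply hin
                apply (hpartv a i).mpr
                refine ⟨i % N, hmem, ?_⟩
                obtain ⟨hq, hm⟩ := hdm a (i - (a+1)*N) (by omega)
                have heq2 : (a+1)*N + (i - (a+1)*N) = i := by omega
                rw [heq2] at hm
                omega
              rw [hFb_part a i (by omega) hc1.1 hc1.2, hrempty, Finset.image_empty, hFbdef]
              simp only
              rw [if_neg (show ¬((a+1+1)*N ≤ i ∧ i < (n+1)*N) by
                have h11 : (a+1+1)*N = (a+2)*N := by ring
                omega)]
            · -- outside slab of a: the two guards agree
              rw [hFbdef]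
              simp only
              have h11 : (a+1+1)*N = (a+2)*N := by ring
              by_cases hc2 : (a+1+1)*N ≤ i ∧ i < (n+1)*N
              · rw [if_pos hc2, if_pos (show (a+1)*N ≤ i ∧ i < (n+1)*N by omega)]
              · rw [if_neg hc2, if_neg (show ¬((a+1)*N ≤ i ∧ i < (n+1)*N) by omega)]
  -- f-values of the parts
  have hpartf : ∀ u, u < n → ∀ k, k ≤ t → f (part u) k = {W k} := by
    intro u hu k hk
    rcases Nat.eq_zero_or_pos k with h0 | h1
    · subst h0; rw [habc.1, hW0]
    · rw [hpartdef]
      simp only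
      rw [hanon, hneut, hE k h1 hk, Finset.image_singleton, hfixim (τf u) (hτmem u hu) k hk]
  -- f-values of the nests
  have nest_f : ∀ d a, a + d = n → 0 < d → ∀ k, k ≤ t →
      f (nestP ((List.range' a d).map part)) k = {W k} := by
    intro d
    induction d with
    | zero => intro a h h2; omega
    | succ d ih =>
      intro a han _
      rcases Nat.eq_zero_or_pos d with hd0 | hd1
      · subst hd0
        rw [List.range'_one, List.map_cons, List.map_nil]
        intro k hk
        exact hpartf a (by omega) k hk
      · have hrange : List.range' a (d+1) = a :: List.range' (a+1) d := List.range'_succ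
        rw [hrange, List.map_cons]
        have hne' : (List.range' (a+1) d).map part ≠ [] := by
          intro h
          have := congrArg List.length h
          simp at this
          omega
        rw [nestP_cons hne']
        have hvrest : (nestP ((List.range' (a+1) d).map part)).voters = Fv (a+1) := by
          rw [nest_eq d (a+1) (by omega) hd1]
        have hdisj : Profile.Disj (part a) (nestP ((List.range' (a+1) d).map part)) := by
          rw [Profile.Disj, hvrest, Finset.disjoint_left]
          intro i hi hi2
          obtain ⟨r, hr, hieq⟩ := (hpartv a i).mp hi
          rw [hFvdef] at hi2
          simp only [Finset.mem_biUnion, Finset.mem_Ico] at hi2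
          obtain ⟨u, ⟨hu1, hu2⟩, hiu⟩ := hi2
          obtain ⟨r', hr', hieq'⟩ := (hpartv u i).mp hiu
          have h1 := hvN r hr
          have h2 := hvN r' hr'
          have h3 : (a+2)*N ≤ (u+1)*N := Nat.mul_le_mul_right N (by omega)
          have ha2 : (a+2)*N = (a+1)*N + N := by ring
          omega
        refine combine_chain habc hg2 hg3 hdisj (by omega) hW0
          (fun k h1 h2 => (hx k h1 h2).1) hcard ?_
        intro k h1 h2
        have hgX : g (part a) (W (k-1)) = {x k} :=
          g_singleton habc hg1 hg3 h1 (by omega)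
            (hpartf a (by omega) (k-1) (by omega)) (hpartf a (by omega) k h2)
            (hx k h1 h2).1 (hx k h1 h2).2
        have hgY : g (nestP ((List.range' (a+1) d).map part)) (W (k-1)) = {x k} :=
          g_singleton habc hg1 hg3 h1 (by omega)
            (ih (a+1) (by omega) hd1 (k-1) (by omega)) (ih (a+1) (by omega) hd1 k h2)
            (hx k h1 h2).1 (hx k h1 h2).2
        rw [hgX, hgY, Finset.inter_self]
  -- the symmetrized profile
  set F : Profile C := ⟨Fv 0, Fb 0⟩ with hFdef
  have hFk : ∀ k, k ≤ t → f F k = {W k} := by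
    intro k hk
    rw [hFdef, ← nest_eq n 0 (by omega) hn]
    exact nest_f n 0 (by omega) hn k hk
  obtain ⟨hne, heq⟩ := hg3 F (t+1) (by omega) ht
  simp only [Nat.add_sub_cancel] at hne heq
  rw [hFk t le_rfl, Finset.singleton_biUnion] at heq
  set S : Finset C := g F (W t) with hSdef
  have hSne : S.Nonempty := by
    apply hne
    rw [hFk t le_rfl]
    exact Finset.mem_singleton_self _
  have hSsub : ∀ z ∈ S, z ∉ W t := fun z hz => g_subset hg1 hz
  -- membership in F.voters
  have hFv : ∀ i, i ∈ F.voters ↔ ∃ u, u < n ∧ ∃ r ∈ E₀.voters, i = (u+1)*N + r := by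
    intro i
    rw [hFdef]
    show i ∈ Fv 0 ↔ _
    rw [hFvdef]
    simp only [Finset.mem_biUnion, Finset.mem_Ico]
    constructor
    · rintro ⟨u, ⟨_, hu2⟩, h⟩
      exact ⟨u, hu2, (hpartv u i).mp h⟩
    · rintro ⟨u, hu, h⟩
      exact ⟨u, ⟨by omega, hu⟩, (hpartv u i).mpr h⟩
  have hFb0 : ∀ i, F.ballot i = Fb 0 i := fun i => rfl
  -- the symmetry: F is invariant under candidate permutations in G, up to voter renaming
  have hinv : ∀ σ ∈ G, (f F (t+1)).image (fun Wc => Wc.image σ) = f F (t+1) := by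
    intro σ hσ
    set s1 : ℕ → ℕ := fun u => gl.idxOf (σ * τf u) with hs1def
    set s2 : ℕ → ℕ := fun u => gl.idxOf (σ⁻¹ * τf u) with hs2def
    have hs1lt : ∀ u, u < n → s1 u < n :=
      fun u hu => (hidx _ (hGmul σ (τf u) hσ (hτmem u hu))).1
    have hs2lt : ∀ u, u < n → s2 u < n :=
      fun u hu => (hidx _ (hGmul σ⁻¹ (τf u) (hGinv σ hσ) (hτmem u hu))).1
    have hτs1 : ∀ u, u < n → τf (s1 u) = σ * τf u :=
      fun u hu => (hidx _ (hGmul σ (τf u) hσ (hτmem u hu))).2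
    have hτs2 : ∀ u, u < n → τf (s2 u) = σ⁻¹ * τf u :=
      fun u hu => (hidx _ (hGmul σ⁻¹ (τf u) (hGinv σ hσ) (hτmem u hu))).2
    have hs2s1 : ∀ u, u < n → s2 (s1 u) = u := by
      intro u hu
      rw [hs2def]
      simp only
      rw [hτs1 u hu, inv_mul_cancel_left]
      exact hidx_get u hu
    have hs1s2 : ∀ u, u < n → s1 (s2 u) = u := by
      intro u hu
      rw [hs1def]
      simp only
      rw [hτs2 u hu, mul_inv_cancel_left]
      exact hidx_get u hu
    set φ : (ℕ → ℕ) → ℕ → ℕ := fun sf i =>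
      if N ≤ i ∧ i < (n+1)*N then (sf (i / N - 1) + 1)*N + i % N else i with hφdef
    have hφin : ∀ (sf : ℕ → ℕ) i, (∀ u, u < n → sf u < n) → N ≤ i → i < (n+1)*N →
        φ sf i = (sf (i / N - 1) + 1)*N + i % N ∧ N ≤ φ sf i ∧ φ sf i < (n+1)*N ∧
        (φ sf i) / N - 1 = sf (i / N - 1) ∧ (φ sf i) % N = i % N := by
      intro sf i hsf h1 h2
      obtain ⟨hu, hieq, hr⟩ := hslab i h1 h2
      have hval : φ sf i = (sf (i / N - 1) + 1)*N + i % N := by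
        rw [hφdef]; simp only; rw [if_pos ⟨h1, h2⟩]
      obtain ⟨hq, hm⟩ := hdm (sf (i / N - 1)) (i % N) hr
      have hlt : sf (i / N - 1) < n := hsf _ hu
      have hb1 : N ≤ (sf (i / N - 1) + 1)*N + i % N := by
        have := hMN (sf (i / N - 1)); omega
      have hb2 : (sf (i / N - 1) + 1)*N + i % N < (n+1)*N := by
        have e1 : (sf (i / N - 1) + 2)*N = (sf (i / N - 1) + 1)*N + N := by ring
        have e2 : (sf (i / N - 1) + 2)*N ≤ (n+1)*N := Nat.mul_le_mul_right N (by omega)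
        omega
      refine ⟨hval, by omega, by omega, ?_, ?_⟩
      · rw [hval, hq]
        omega
      · rw [hval, hm]
    have hφinv : ∀ (sa sb : ℕ → ℕ), (∀ u, u < n → sa u < n) → (∀ u, u < n → sb u < n) →
        (∀ u, u < n → sb (sa u) = u) → ∀ i, φ sb (φ sa i) = i := by
      intro sa sb ha hb hab i
      by_cases hi : N ≤ i ∧ i < (n+1)*N
      · obtain ⟨hu, hieq, hr⟩ := hslab i hi.1 hi.2
        obtain ⟨hval, hb1, hb2, hdiv, hmod⟩ := hφin sa i ha hi.1 hi.2
        obtain ⟨hval', _, _, _, _⟩ := hφin sb (φ sa i) hb hb1 hb2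
        rw [hval', hdiv, hmod, hab _ hu]
        omega
      · have h1 : φ sa i = i := by rw [hφdef]; simp only; rw [if_neg hi]
        rw [h1]
        rw [hφdef]; simp only; rw [if_neg hi]
    set Pσ : Equiv.Perm ℕ :=
      ⟨φ s2, φ s1, fun i => hφinv s2 s1 hs2lt hs1lt hs1s2 i,
        fun i => hφinv s1 s2 hs1lt hs2lt hs2s1 i⟩ with hPdef
    have hPsymm : ∀ i, Pσ.symm i = φ s1 i := fun i => rfl
    have hPapp : ∀ i, Pσ i = φ s2 i := fun i => rfl
    -- voters are preserved
    have hvoters : F.voters.map Pσ.toEmbedding = F.voters := by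
      apply Finset.eq_of_subset_of_card_le
      · intro i hi
        rw [Finset.mem_map] at hi
        obtain ⟨j, hj, hji⟩ := hi
        obtain ⟨u, hu, r, hr, hjeq⟩ := (hFv j).mp hj
        have hrN := hvN r hr
        have hj1 : N ≤ j := by have := hMN u; omega
        have hj2 : j < (n+1)*N := by
          have e1 : (u+2)*N = (u+1)*N + N := by ring
          have e2 : (u+2)*N ≤ (n+1)*N := Nat.mul_le_mul_right N (by omega)
          omega
        obtain ⟨hval, _, _, _, _⟩ := hφin s2 j hs2lt hj1 hj2
        have hjdiv : j / N - 1 = u := by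
          obtain ⟨hq, hm⟩ := hdm u r hrN
          rw [hjeq, hq]; omega
        have hjmod : j % N = r := by
          obtain ⟨hq, hm⟩ := hdm u r hrN
          rw [hjeq, hm]
        have : Pσ j = (s2 u + 1)*N + r := by
          rw [hPapp, hval, hjdiv, hjmod]
        have hji' : Pσ j = i := hji
        apply (hFv i).mpr
        exact ⟨s2 u, hs2lt u hu, r, hr, by omega⟩
      · rw [Finset.card_map]
    -- ballots are twisted by σ
    have hballot : ∀ i, F.ballot (Pσ.symm i) = (F.ballot i).image σ := by
      intro i
      rw [hPsymm, hFb0, hFb0]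
      by_cases hi : N ≤ i ∧ i < (n+1)*N
      · obtain ⟨hu, hieq, hr⟩ := hslab i hi.1 hi.2
        obtain ⟨hval, hb1, hb2, hdiv, hmod⟩ := hφin s1 i hs1lt hi.1 hi.2
        rw [hFbdef]
        simp only
        have h01 : (0+1)*N = N := by ring
        rw [if_pos (show (0+1)*N ≤ φ s1 i ∧ φ s1 i < (n+1)*N by omega),
            if_pos (show (0+1)*N ≤ i ∧ i < (n+1)*N by omega)]
        rw [hdiv, hmod, hτs1 _ hu]
        rw [Finset.image_image]
        apply Finset.image_congr
        intro c _
        exact (Equiv.Perm.mul_apply σ (τf (i / N - 1)) c).symm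
      · have h1 : φ s1 i = i := by rw [hφdef]; simp only; rw [if_neg hi]
        have h01 : (0+1)*N = N := by ring
        rw [h1, hFbdef]
        simp only
        rw [if_neg (show ¬((0+1)*N ≤ i ∧ i < (n+1)*N) by omega)]
        rw [Finset.image_empty]
    have hEqσ : Profile.permVoters Pσ F = Profile.mapCand σ F := by
      apply Profile.ext'
      · exact hvoters
      · funext i
        exact hballot i
    calc (f F (t+1)).image (fun Wc => Wc.image σ)
        = f (Profile.mapCand σ F) (t+1) := (hneut F σ (t+1)).symm
      _ = f (Profile.permVoters Pσ F) (t+1) := by rw [hEqσ]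
      _ = f F (t+1) := hanon F Pσ (t+1)
  -- S is invariant under all of G
  have hSinv : ∀ σ ∈ G, S.image σ = S := by
    intro σ hσ
    have h1 := hinv σ hσ
    rw [heq] at h1
    rw [Finset.image_image] at h1
    have h2 : S.image ((fun Wc => Finset.image σ Wc) ∘ (fun z => insert z (W t))) =
        (S.image σ).image (fun z => insert z (W t)) := by
      rw [Finset.image_image]
      apply Finset.image_congr
      intro z _
      show (insert z (W t)).image σ = insert (σ z) (W t)
      rw [Finset.image_insert, hfixim σ hσ t le_rfl]
    rw [h2] at h1
    refine image_insert_inj (U := W t) ?_ hSsub h1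
    intro z hz hzW
    obtain ⟨w, hw, hwz⟩ := Finset.mem_image.mp hz
    have hfix : σ z = z := (hGmem σ).mp hσ z hzW
    have hwz' : w = z := σ.injective (by rw [hwz, hfix])
    exact hSsub w hw (hwz' ▸ hzW)
  -- S is the full complement
  have hSfull : S = univ \ W t := by
    apply Finset.Subset.antisymm (hg1 F (W t))
    intro y hy
    have hyW : y ∉ W t := (Finset.mem_sdiff.mp hy).2
    obtain ⟨x₀, hx₀⟩ := hSne
    have hx₀W : x₀ ∉ W t := hSsub x₀ hx₀
    set σ := Equiv.swap x₀ y with hσdef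
    have hσG : σ ∈ G := by
      apply (hGmem σ).mpr
      intro a ha
      apply Equiv.swap_apply_of_ne_of_ne
      · intro h; rw [h] at ha; exact hx₀W ha
      · intro h; rw [h] at ha; exact hyW ha
    have : σ x₀ ∈ S.image σ := Finset.mem_image_of_mem σ hx₀
    rw [hSinv σ hσG, hσdef, Equiv.swap_apply_left] at this
    exact this
  -- conclusion
  refine ⟨F, ?_, ?_, ?_⟩
  · intro i hi
    rw [hFb0]
    rw [hFbdef]
    simp only
    have h01 : (0+1)*N = N := by ring
    by_cases hc : (0+1)*N ≤ i ∧ i < (n+1)*N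
    · rw [if_pos hc]
      obtain ⟨hu, hieq, hr⟩ := hslab i (by omega) hc.2
      have : E₀.ballot (i % N) = ∅ := by
        apply hcl
        intro hmem
        apply hi
        apply (hFv i).mpr
        exact ⟨i / N - 1, hu, i % N, hmem, hieq⟩
      rw [this, Finset.image_empty]
    · rw [if_neg hc]
  · intro k h1 h2
    exact hFk k h2
  · rw [heq, hSfull]

end Sym

section Main

variable {f : Profile C → ℕ → Finset (Finset C)} {g : Profile C → Finset C → Finset C}

lemma main_aux (habc : IsABCRule f) (hanon : Anonymous f) (hneut : Neutral f)
    (hnimp : NonImposing f)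
    (hg1 : IsGenerator g) (hg2 : ConsistentGen g) (hg3 : Generates g f) :
    ∀ l : ℕ, ∀ W : ℕ → Finset C, W 0 = ∅ →
      (∀ k, 1 ≤ k → k ≤ l → (W k).card = k ∧ W (k-1) ⊆ W k) →
      l + 1 ≤ Fintype.card C →
      ∃ A, Clean A ∧ (∀ k, 1 ≤ k → k ≤ l → f A k = {W k}) ∧
        f A (l+1) = (univ \ W l).image (fun z => insert z (W l)) := by
  intro l
  induction l with
  | zero =>
    intro W hW0 hWc hl
    have hCne : Nonempty C := Fintype.card_pos_iff.mp (by omega)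
    obtain ⟨F, hF1, hF2, hF3⟩ := sym_step habc hanon hneut hg1 hg2 hg3 (t := 0) hl hW0
      (x := fun _ => Classical.arbitrary C)
      (fun k h1 h2 => absurd (le_trans h1 h2) (by omega))
      (fun k hk => by
        have : k = 0 := by omega
        rw [this, hW0]
        exact Finset.card_empty)
      (E₀ := ⟨∅, fun _ => ∅⟩) (fun i _ => rfl)
      (fun k h1 h2 => absurd (le_trans h1 h2) (by omega))
    exact ⟨F, hF1, hF2, hF3⟩
  | succ l ih =>
    intro W hW0 hWc hl1
    have hCne : Nonempty C := Fintype.card_pos_iff.mp (by omega)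
    -- the new candidates of the target chain
    have hWprevcard : ∀ k, 1 ≤ k → k ≤ l+1 → (W (k-1)).card = k-1 := by
      intro k h1 h2
      rcases Nat.eq_zero_or_pos (k-1) with h0 | hpos
      · rw [h0, show W 0 = ∅ from hW0, Finset.card_empty]
      · exact (hWc (k-1) hpos (by omega)).1
    have hxex : ∀ k, ∃ xx : C, 1 ≤ k → k ≤ l+1 →
        insert xx (W (k-1)) = W k ∧ xx ∉ W (k-1) := by
      intro k
      by_cases hk : 1 ≤ k ∧ k ≤ l+1
      · obtain ⟨hc, hsub⟩ := hWc k hk.1 hk.2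
        have hprev : (W (k-1)).card = k - 1 := hWprevcard k hk.1 hk.2
        have hsd : (W k \ W (k-1)).card = 1 := by
          rw [Finset.card_sdiff_of_subset hsub]
          omega
        obtain ⟨xx, hxx⟩ := Finset.card_eq_one.mp hsd
        have hxxm : xx ∈ W k \ W (k-1) := by
          rw [hxx]; exact Finset.mem_singleton_self _
        rw [Finset.mem_sdiff] at hxxm
        refine ⟨xx, fun _ _ => ⟨?_, hxxm.2⟩⟩
        apply Finset.Subset.antisymm
        · exact Finset.insert_subset hxxm.1 hsub
        · intro z hz
          by_cases hzw : z ∈ W (k-1)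
          · exact Finset.mem_insert_of_mem hzw
          · have : z ∈ W k \ W (k-1) := Finset.mem_sdiff.mpr ⟨hz, hzw⟩
            rw [hxx, Finset.mem_singleton] at this
            rw [this]
            exact Finset.mem_insert_self _ _
      · exact ⟨Classical.arbitrary C, fun h1 h2 => absurd ⟨h1, h2⟩ hk⟩
    choose x hxch using hxex
    have hx : ∀ k, 1 ≤ k → k ≤ l+1 → insert (x k) (W (k-1)) = W k ∧ x k ∉ W (k-1) :=
      fun k h1 h2 => hxch k h1 h2
    have hcardW : ∀ k, k ≤ l+1 → (W k).card = k := by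
      intro k hk
      rcases Nat.eq_zero_or_pos k with h0 | hpos
      · rw [h0, hW0]; exact Finset.card_empty
      · exact (hWc k hpos hk).1
    -- a profile with the top committee as unique winner
    obtain ⟨D, hD⟩ := hnimp (W (l+1))
    rw [(hWc (l+1) (by omega) le_rfl).1] at hD
    -- extract a linked chain below it
    obtain ⟨V, y, hV0, hVL, hVmem, hVlink⟩ :=
      chain_extract habc hg1 hg3 (by omega) (by omega) hD
    have hVcard : ∀ k, k ≤ l+1 → (V k).card = k :=
      fun k hk => habc.2.2 D k (V k) (hVmem k hk)
    -- induction hypothesis applied to the extracted chain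
    obtain ⟨A, hAcl, hAk, hAl⟩ := ih V hV0
      (fun k h1 h2 => ⟨hVcard k (by omega),
        by rw [← (hVlink k h1 (by omega)).1]; exact Finset.subset_insert _ _⟩)
      (by omega)
    -- relabel voters of A away from D
    obtain ⟨π, hdisj⟩ := exists_fresh A D.voters
    set A' := Profile.permVoters π A with hA'def
    have hA'cl : Clean A' := clean_permVoters hAcl π
    have hA'k : ∀ k, k ≤ l → f A' k = {V k} := by
      intro k hk
      rw [hA'def, hanon]
      rcases Nat.eq_zero_or_pos k with h0 | hpos
      · rw [h0, habc.1, hV0]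
      · exact hAk k hpos hk
    have hA'l : f A' (l+1) = (univ \ V l).image (fun z => insert z (V l)) := by
      rw [hA'def, hanon]; exact hAl
    have hdisj' : Profile.Disj D A' := Disjoint.symm hdisj
    -- the combined profile picks the extracted chain uniquely
    have hE : ∀ k, k ≤ l+1 → f (D.combine A') k = {V k} := by
      refine combine_chain habc hg2 hg3 hdisj' (by omega) hV0
        (fun k h1 h2 => (hVlink k h1 h2).1) hVcard ?_
      intro k h1 h2
      rcases Nat.lt_or_ge k (l+1) with hkl | hkL
      · have hgA : g A' (V (k-1)) = {y k} :=
          g_singleton habc hg1 hg3 h1 (by omega)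
            (hA'k (k-1) (by omega)) (hA'k k (by omega))
            (hVlink k h1 h2).1 (hVlink k h1 h2).2.1
        rw [hgA]
        exact Finset.inter_singleton_of_mem (hVlink k h1 h2).2.2
      · have hkeq : k = l+1 := by omega
        subst hkeq
        have hl1' : l + 1 - 1 = l := by omega
        have hgA : g A' (V (l+1-1)) = univ \ V (l+1-1) := by
          rw [hl1']
          exact g_full habc hg1 hg3 (k := l+1) (by omega) (by omega)
            (by rw [hl1']; exact hA'k l le_rfl) hA'l
        have hins : insert (y (l+1)) (V (l+1-1)) = W (l+1) := by
          rw [(hVlink (l+1) h1 h2).1, hVL]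
        have hgD : g D (V (l+1-1)) = {y (l+1)} :=
          g_top habc hg1 hg3 (by omega) (by omega) hD
            (hVmem (l+1-1) (by omega)) hins (hVlink (l+1) h1 h2).2.1
            (hVlink (l+1) h1 h2).2.2
        rw [hgD, hgA]
        exact Finset.singleton_inter_of_mem
          (Finset.mem_sdiff.mpr ⟨Finset.mem_univ _, (hVlink (l+1) h1 h2).2.1⟩)
    -- relabel candidates to map the extracted chain onto the target chain
    obtain ⟨τ', hτ'⟩ := exists_perm_chain hV0 hW0
      (fun k h1 h2 => ⟨(hVlink k h1 h2).1, (hVlink k h1 h2).2.1⟩) hx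
    set E₀ := Profile.mapCand τ' (D.combine A') with hE₀def
    have hE₀cl : Clean E₀ := clean_mapCand (clean_combine hA'cl) τ'
    have hE₀ : ∀ k, 1 ≤ k → k ≤ l+1 → f E₀ k = {W k} := by
      intro k h1 h2
      rw [hE₀def, hneut, hE k h2, Finset.image_singleton, hτ' k h2]
    exact sym_step habc hanon hneut hg1 hg2 hg3 (t := l+1) hl1 hW0 hx hcardW hE₀cl hE₀

end Main

/-- Strengthened non-imposition for proper consistently committee monotone ABC voting rules:
every increasing sequence of committees can be enforced as the unique winners, and in the next
step all remaining candidates are tied. -/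
theorem seq_nonImposition (f : Profile C → ℕ → Finset (Finset C))
    (hp : ProperRule f) (hc : ConsistentlyCommitteeMonotone f)
    (ℓ : ℕ) (h1 : 1 ≤ ℓ) (h2 : ℓ ≤ Fintype.card C - 1)
    (W : ℕ → Finset C) (hW0 : W 0 = ∅)
    (hWc : ∀ k, 1 ≤ k → k ≤ ℓ → (W k).card = k ∧ W (k-1) ⊆ W k) :
    ∃ A : Profile C, (∀ k, 1 ≤ k → k ≤ ℓ → f A k = {W k}) ∧
      f A (ℓ+1) = (univ \ W ℓ).image fun x => insert x (W ℓ) := by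
  obtain ⟨habc, hanon, hneut, hcont, hnimp⟩ := hp
  obtain ⟨g, hg1, hg2, hg3⟩ := hc
  have hl : ℓ + 1 ≤ Fintype.card C := by omega
  obtain ⟨A, _, hAk, hAl⟩ := main_aux habc hanon hneut hnimp hg1 hg2 hg3 ℓ W hW0 hWc hl
  exact ⟨A, hAk, hAl⟩
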